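/- Let E = E_s ⊕ E_u be an ultrametric Banach space over a valued field, and A : E → E a hyperbolic automorphism (there is an adapted norm, not necessarily ultrametric, satisfying ‖A|_{E_s}‖ < 1 and ‖A⁻¹|_{E_u}‖ < 1 and ‖x+y‖ = max{‖x‖,‖y‖} for x ∈ E_s, y ∈ E_u). Then there exists an ultrametric norm on E adapted to A, i.e., an ultrametric norm ‖·‖~ defining the topology with ‖x + y‖~ = max{‖x‖~, ‖y‖~} for x ∈ E_s, y ∈ E_u, and ‖A|_{E_s}‖~ < 1, ‖(A⁻¹)|_{E_u}‖~ < 1 (operator norms with respect to ‖·‖~). -/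

import Mathlib

open NNReal

lemma adapted_aux {K E : Type*} [NontriviallyNormedField K]
    [NormedAddCommGroup E] [NormedSpace K E] [IsUltrametricDist E]
    (S : Submodule K E) (f : E →ₗ[K] E) (hf : ∀ x ∈ S, f x ∈ S)
    (N : E → ℝ) (c₁ c₂ : ℝ) (hc₁ : 0 < c₁)
    (hlow : ∀ x, c₁ * ‖x‖ ≤ N x) (hupp : ∀ x, N x ≤ c₂ * ‖x‖)
    (μ : ℝ) (hμ0 : 0 < μ) (_hμ1 : μ < 1)
    (hcontr : ∀ x ∈ S, N (f x) ≤ μ * N x) :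
    ∃ g : E → ℝ,
      (∀ x ∈ S, ‖x‖ ≤ g x) ∧
      (∀ x ∈ S, g x ≤ (c₂ / c₁) * ‖x‖) ∧
      (∀ x ∈ S, ∀ y ∈ S, g (x + y) ≤ max (g x) (g y)) ∧
      (∀ (c : K), ∀ x ∈ S, g (c • x) = ‖c‖ * g x) ∧
      (∀ x ∈ S, g (f x) ≤ μ * g x) := by
  set g : E → ℝ := fun x => ⨆ n : ℕ, (μ ^ n)⁻¹ * ‖f^[n] x‖ with hg
  have hmem : ∀ x ∈ S, ∀ n : ℕ, f^[n] x ∈ S := by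
    intro x hx n
    induction n with
    | zero => simpa using hx
    | succ n ih => rw [Function.iterate_succ_apply']; exact hf _ ih
  have hNiter : ∀ x ∈ S, ∀ n : ℕ, N (f^[n] x) ≤ μ ^ n * N x := by
    intro x hx n
    induction n with
    | zero => simp
    | succ n ih =>
      rw [Function.iterate_succ_apply']
      calc N (f (f^[n] x)) ≤ μ * N (f^[n] x) := hcontr _ (hmem x hx n)
        _ ≤ μ * (μ ^ n * N x) := by
            exact mul_le_mul_of_nonneg_left ih hμ0.le
        _ = μ ^ (n + 1) * N x := by ring
  have hbdd : ∀ x ∈ S, ∀ n : ℕ, (μ ^ n)⁻¹ * ‖f^[n] x‖ ≤ (c₂ / c₁) * ‖x‖ := by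
    intro x hx n
    have hμn : (0:ℝ) < μ ^ n := pow_pos hμ0 n
    have h1 : c₁ * ‖f^[n] x‖ ≤ μ ^ n * (c₂ * ‖x‖) :=
      (hlow _).trans ((hNiter x hx n).trans
        (mul_le_mul_of_nonneg_left (hupp x) hμn.le))
    rw [inv_mul_le_iff₀ hμn]
    calc ‖f^[n] x‖ = (c₁ * ‖f^[n] x‖) / c₁ := by field_simp
      _ ≤ (μ ^ n * (c₂ * ‖x‖)) / c₁ := by gcongr
      _ = μ ^ n * (c₂ / c₁ * ‖x‖) := by ring
  have hBdd : ∀ x ∈ S, BddAbove (Set.range fun n : ℕ => (μ ^ n)⁻¹ * ‖f^[n] x‖) := by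
    intro x hx
    exact ⟨(c₂ / c₁) * ‖x‖, by rintro _ ⟨n, rfl⟩; exact hbdd x hx n⟩
  refine ⟨g, ?_, ?_, ?_, ?_, ?_⟩
  · intro x hx
    have := le_ciSup (hBdd x hx) 0
    simpa using this
  · intro x hx
    exact ciSup_le (hbdd x hx)
  · intro x hx y hy
    apply ciSup_le
    intro n
    have hit : f^[n] (x + y) = f^[n] x + f^[n] y := by
      induction n with
      | zero => simp
      | succ n ih => rw [Function.iterate_succ_apply', Function.iterate_succ_apply',
          Function.iterate_succ_apply', ih, map_add]
    rw [hit]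
    have hμn : (0:ℝ) ≤ (μ ^ n)⁻¹ := inv_nonneg.2 (pow_pos hμ0 n).le
    calc (μ ^ n)⁻¹ * ‖f^[n] x + f^[n] y‖
        ≤ (μ ^ n)⁻¹ * max ‖f^[n] x‖ ‖f^[n] y‖ :=
          mul_le_mul_of_nonneg_left (IsUltrametricDist.norm_add_le_max _ _) hμn
      _ = max ((μ ^ n)⁻¹ * ‖f^[n] x‖) ((μ ^ n)⁻¹ * ‖f^[n] y‖) := by
          rcases max_cases ‖f^[n] x‖ ‖f^[n] y‖ with ⟨h1, h2⟩ | ⟨h1, h2⟩ <;>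
            rw [h1] <;> symm
          · exact max_eq_left (mul_le_mul_of_nonneg_left h2 hμn)
          · exact max_eq_right (mul_le_mul_of_nonneg_left h2.le hμn)
      _ ≤ max (g x) (g y) :=
          max_le_max (le_ciSup (hBdd x hx) n) (le_ciSup (hBdd y hy) n)
  · intro c x hx
    have hit : ∀ n : ℕ, f^[n] (c • x) = c • f^[n] x := by
      intro n
      induction n with
      | zero => simp
      | succ n ih => rw [Function.iterate_succ_apply', Function.iterate_succ_apply', ih,
          map_smul]
    rw [hg]
    simp only [hit, norm_smul]
    rw [Real.mul_iSup_of_nonneg (norm_nonneg c)]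
    congr 1
    funext n
    ring
  · intro x hx
    apply ciSup_le
    intro n
    have hit : f^[n] (f x) = f^[n+1] x := (Function.iterate_succ_apply f n x).symm
    rw [hit]
    have key : (μ ^ n)⁻¹ * ‖f^[n+1] x‖ = μ * ((μ ^ (n+1))⁻¹ * ‖f^[n+1] x‖) := by
      rw [← mul_assoc]
      congr 1
      field_simp
      ring
    rw [key]
    exact mul_le_mul_of_nonneg_left (le_ciSup (hBdd x hx) (n+1)) hμ0.le

/-- Existence of an ultrametric adapted norm: if a hyperbolic automorphism of an
ultrametric Banach space has some (not necessarily ultrametric) adapted norm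
`N`, then there is an ultrametric adapted norm `Ntil` equivalent to `‖·‖`. -/
theorem exists_ultrametric_adapted_norm
    {K E : Type*} [NontriviallyNormedField K]
    [NormedAddCommGroup E] [NormedSpace K E] [CompleteSpace E]
    [IsUltrametricDist E]
    (Es Eu : Submodule K E) (hcompl : IsCompl Es Eu)
    (A : E ≃L[K] E)
    (hAs : ∀ x ∈ Es, A x ∈ Es) (hAu : ∀ x ∈ Eu, A x ∈ Eu)
    (hAs' : ∀ x ∈ Es, A.symm x ∈ Es) (hAu' : ∀ x ∈ Eu, A.symm x ∈ Eu)
    (N : E → ℝ)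
    (hN0 : ∀ x, 0 ≤ N x)
    (hNtri : ∀ x y, N (x + y) ≤ N x + N y)
    (hNhom : ∀ (c : K) (x : E), N (c • x) = ‖c‖ * N x)
    (hNequiv : ∃ c₁ c₂ : ℝ, 0 < c₁ ∧ 0 < c₂ ∧ ∀ x, c₁ * ‖x‖ ≤ N x ∧ N x ≤ c₂ * ‖x‖)
    (hNmax : ∀ x ∈ Es, ∀ y ∈ Eu, N (x + y) = max (N x) (N y))
    (hNs : ∃ θ : ℝ, θ < 1 ∧ ∀ x ∈ Es, N (A x) ≤ θ * N x)
    (hNu : ∃ θ : ℝ, θ < 1 ∧ ∀ x ∈ Eu, N (A.symm x) ≤ θ * N x) :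
    ∃ Ntil : E → ℝ,
      (∀ x, 0 ≤ Ntil x) ∧
      (∀ x y, Ntil (x + y) ≤ max (Ntil x) (Ntil y)) ∧
      (∀ (c : K) (x : E), Ntil (c • x) = ‖c‖ * Ntil x) ∧
      (∃ c₁ c₂ : ℝ, 0 < c₁ ∧ 0 < c₂ ∧ ∀ x, c₁ * ‖x‖ ≤ Ntil x ∧ Ntil x ≤ c₂ * ‖x‖) ∧
      (∀ x ∈ Es, ∀ y ∈ Eu, Ntil (x + y) = max (Ntil x) (Ntil y)) ∧
      (∃ θ : ℝ, θ < 1 ∧ ∀ x ∈ Es, Ntil (A x) ≤ θ * Ntil x) ∧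
      (∃ θ : ℝ, θ < 1 ∧ ∀ x ∈ Eu, Ntil (A.symm x) ≤ θ * Ntil x) := by
  obtain ⟨c₁, c₂, hc₁, hc₂, hN⟩ := hNequiv
  obtain ⟨θs, hθs1, hθs⟩ := hNs
  obtain ⟨θu, hθu1, hθu⟩ := hNu
  set μs : ℝ := max θs (1/2) with hμs
  set μu : ℝ := max θu (1/2) with hμu
  have hμs0 : (0:ℝ) < μs := lt_of_lt_of_le (by norm_num) (le_max_right _ _)
  have hμu0 : (0:ℝ) < μu := lt_of_lt_of_le (by norm_num) (le_max_right _ _)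
  have hμs1 : μs < 1 := max_lt hθs1 (by norm_num)
  have hμu1 : μu < 1 := max_lt hθu1 (by norm_num)
  have hcontrs : ∀ x ∈ Es, N (A x) ≤ μs * N x := fun x hx =>
    (hθs x hx).trans (mul_le_mul_of_nonneg_right (le_max_left _ _) (hN0 x))
  have hcontru : ∀ x ∈ Eu, N (A.symm x) ≤ μu * N x := fun x hx =>
    (hθu x hx).trans (mul_le_mul_of_nonneg_right (le_max_left _ _) (hN0 x))
  obtain ⟨gs, hgs_low, hgs_up, hgs_ultra, hgs_hom, hgs_contr⟩ :=
    adapted_aux Es (A : E →L[K] E).toLinearMap hAs N c₁ c₂ hc₁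
      (fun x => (hN x).1) (fun x => (hN x).2) μs hμs0 hμs1 hcontrs
  obtain ⟨gu, hgu_low, hgu_up, hgu_ultra, hgu_hom, hgu_contr⟩ :=
    adapted_aux Eu (A.symm : E →L[K] E).toLinearMap hAu' N c₁ c₂ hc₁
      (fun x => (hN x).1) (fun x => (hN x).2) μu hμu0 hμu1 hcontru
  -- projections
  set πs : E →ₗ[K] Es := Es.projectionOnto Eu hcompl with hπs
  set πu : E →ₗ[K] Eu := Eu.projectionOnto Es hcompl.symm with hπu
  have hsum : ∀ x : E, (πs x : E) + (πu x : E) = x := fun x =>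
    Submodule.projection_add_projection_eq_self hcompl x
  have hπs_left : ∀ x ∈ Es, (πs x : E) = x := fun x hx => by
    rw [hπs]; rw [Submodule.linearProjOfIsCompl_apply_left hcompl ⟨x, hx⟩]
  have hπs_right : ∀ y ∈ Eu, (πs y : E) = 0 := fun y hy => by
    rw [hπs, Submodule.linearProjOfIsCompl_apply_right' hcompl hy]; rfl
  have hπu_left : ∀ y ∈ Eu, (πu y : E) = y := fun y hy => by
    rw [hπu]; rw [Submodule.linearProjOfIsCompl_apply_left hcompl.symm ⟨y, hy⟩]
  have hπu_right : ∀ x ∈ Es, (πu x : E) = 0 := fun x hx => by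
    rw [hπu, Submodule.linearProjOfIsCompl_apply_right' hcompl.symm hx]; rfl
  have hgs0 : gs 0 = 0 := by
    have h1 := hgs_up 0 (Submodule.zero_mem Es)
    have h2 := hgs_low 0 (Submodule.zero_mem Es)
    simp only [norm_zero, mul_zero] at h1 h2
    linarith
  have hgu0 : gu 0 = 0 := by
    have h1 := hgu_up 0 (Submodule.zero_mem Eu)
    have h2 := hgu_low 0 (Submodule.zero_mem Eu)
    simp only [norm_zero, mul_zero] at h1 h2
    linarith
  have hgs_nn : ∀ x ∈ Es, 0 ≤ gs x := fun x hx =>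
    (norm_nonneg x).trans (hgs_low x hx)
  have hgu_nn : ∀ x ∈ Eu, 0 ≤ gu x := fun x hx =>
    (norm_nonneg x).trans (hgu_low x hx)
  set Ntil : E → ℝ := fun x => max (gs (πs x : E)) (gu (πu x : E)) with hNtil
  -- values on Es, Eu
  have hNtil_s : ∀ x ∈ Es, Ntil x = gs x := by
    intro x hx
    rw [hNtil]
    simp only [hπs_left x hx, hπu_right x hx, hgu0]
    exact max_eq_left (hgs_nn x hx)
  have hNtil_u : ∀ y ∈ Eu, Ntil y = gu y := by
    intro y hy
    rw [hNtil]
    simp only [hπs_right y hy, hπu_left y hy, hgs0]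
    exact max_eq_right (hgu_nn y hy)
  refine ⟨Ntil, ?_, ?_, ?_, ?_, ?_, ?_, ?_⟩
  · intro x
    exact le_max_of_le_left (hgs_nn _ (πs x).2)
  · intro x y
    have h1 : (πs (x + y) : E) = (πs x : E) + (πs y : E) := by rw [map_add]; rfl
    have h2 : (πu (x + y) : E) = (πu x : E) + (πu y : E) := by rw [map_add]; rfl
    rw [hNtil]
    simp only [h1, h2]
    apply max_le
    · exact le_trans (hgs_ultra _ (πs x).2 _ (πs y).2)
        (max_le_max (le_max_left _ _) (le_max_left _ _))
    · exact le_trans (hgu_ultra _ (πu x).2 _ (πu y).2)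
        (max_le_max (le_max_right _ _) (le_max_right _ _))
  · intro c x
    have h1 : (πs (c • x) : E) = c • (πs x : E) := by rw [map_smul]; rfl
    have h2 : (πu (c • x) : E) = c • (πu x : E) := by rw [map_smul]; rfl
    rw [hNtil]
    simp only [h1, h2, hgs_hom c _ (πs x).2, hgu_hom c _ (πu x).2]
    rcases max_cases (gs (πs x : E)) (gu (πu x : E)) with ⟨hm, hle⟩ | ⟨hm, hle⟩
    · rw [hm, max_eq_left (mul_le_mul_of_nonneg_left hle (norm_nonneg c))]
    · rw [hm, max_eq_right (mul_le_mul_of_nonneg_left hle.le (norm_nonneg c))]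
  · refine ⟨1, (c₂ / c₁) * (c₂ / c₁), one_pos,
      mul_pos (div_pos hc₂ hc₁) (div_pos hc₂ hc₁), fun x => ⟨?_, ?_⟩⟩
    · rw [one_mul]
      calc ‖x‖ = ‖(πs x : E) + (πu x : E)‖ := by rw [hsum]
        _ ≤ max ‖(πs x : E)‖ ‖(πu x : E)‖ := IsUltrametricDist.norm_add_le_max _ _
        _ ≤ Ntil x :=
            max_le_max (hgs_low _ (πs x).2) (hgu_low _ (πu x).2)
    · have hmax : N x = max (N (πs x : E)) (N (πu x : E)) := by
        conv_lhs => rw [← hsum x]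
        exact hNmax _ (πs x).2 _ (πu x).2
      have hNsle : N (πs x : E) ≤ c₂ * ‖x‖ := by
        refine le_trans ?_ (hN x).2
        rw [hmax]; exact le_max_left _ _
      have hNule : N (πu x : E) ≤ c₂ * ‖x‖ := by
        refine le_trans ?_ (hN x).2
        rw [hmax]; exact le_max_right _ _
      have hns : ‖(πs x : E)‖ ≤ (c₂ / c₁) * ‖x‖ := by
        have h := (hN ((πs x : E))).1.trans hNsle
        rw [div_mul_eq_mul_div, le_div_iff₀ hc₁, mul_comm]
        exact h
      have hnu : ‖(πu x : E)‖ ≤ (c₂ / c₁) * ‖x‖ := by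
        have h := (hN ((πu x : E))).1.trans hNule
        rw [div_mul_eq_mul_div, le_div_iff₀ hc₁, mul_comm]
        exact h
      have hcc : (0:ℝ) ≤ c₂ / c₁ := (div_pos hc₂ hc₁).le
      apply max_le
      · calc gs (πs x : E) ≤ (c₂ / c₁) * ‖(πs x : E)‖ := hgs_up _ (πs x).2
          _ ≤ (c₂ / c₁) * ((c₂ / c₁) * ‖x‖) := mul_le_mul_of_nonneg_left hns hcc
          _ = (c₂ / c₁) * (c₂ / c₁) * ‖x‖ := by ring
      · calc gu (πu x : E) ≤ (c₂ / c₁) * ‖(πu x : E)‖ := hgu_up _ (πu x).2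
          _ ≤ (c₂ / c₁) * ((c₂ / c₁) * ‖x‖) := mul_le_mul_of_nonneg_left hnu hcc
          _ = (c₂ / c₁) * (c₂ / c₁) * ‖x‖ := by ring
  · intro x hx y hy
    have h1 : (πs (x + y) : E) = x := by
      rw [map_add]
      show (πs x : E) + (πs y : E) = x
      rw [hπs_left x hx, hπs_right y hy, add_zero]
    have h2 : (πu (x + y) : E) = y := by
      rw [map_add]
      show (πu x : E) + (πu y : E) = y
      rw [hπu_right x hx, hπu_left y hy, zero_add]
    rw [hNtil]
    simp only [h1, h2]
    rw [← hNtil_s x hx, ← hNtil_u y hy]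
  · refine ⟨μs, hμs1, fun x hx => ?_⟩
    have hAx : A x ∈ Es := hAs x hx
    rw [hNtil_s _ hAx, hNtil_s x hx]
    exact hgs_contr x hx
  · refine ⟨μu, hμu1, fun y hy => ?_⟩
    have hAy : A.symm y ∈ Eu := hAu' y hy
    rw [hNtil_u _ hAy, hNtil_u y hy]
    exact hgu_contr y hy
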